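/- arXiv:1609.06060 — 4 statements merged into one kernel-verified Lean document; each statement's English description precedes it below -/
import Mathlib

section
/- Given a nontrivial X ∈ M_{m×n}(ℂ), the Lie subalgebra of 𝔲(n,m) generated by X̂ and îX is contained in the real span of { V̂_k, X̃_k, ĩX_k : k ≥ 1 }, where V̂_k = blockdiag(i(X*X)^k, -i(XX*)^k), X̃_k has off-diagonal blocks (X*X)^{k-1}X* and X(X*X)^{k-1}, and ĩX_k has off-diagonal blocks -i(X*X)^{k-1}X* and iX(X*X)^{k-1}; conversely this span is a Lie subalgebra containing X̂ and îX. -/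
open Matrix

attribute [local instance 100] LieRing.ofAssociativeRing

section Aux

lemma fromBlocks_sub' {n m : Type*} [Fintype n] [Fintype m]
    (A A' : Matrix n n ℂ) (B B' : Matrix n m ℂ) (C C' : Matrix m n ℂ) (D D' : Matrix m m ℂ) :
    fromBlocks A B C D - fromBlocks A' B' C' D' =
      fromBlocks (A - A') (B - B') (C - C') (D - D') := by
  simp [sub_eq_add_neg, Matrix.fromBlocks_neg, Matrix.fromBlocks_add]

variable {m n : ℕ} (X : Matrix (Fin m) (Fin n) ℂ)

lemma hcommX : ∀ p : ℕ, X * (Xᴴ * X) ^ p = (X * Xᴴ) ^ p * X := by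
  intro p
  induction p with
  | zero => simp
  | succ p ih =>
    rw [pow_succ, pow_succ, ← Matrix.mul_assoc X, ih,
      Matrix.mul_assoc, Matrix.mul_assoc, Matrix.mul_assoc]

lemma hcommX' : ∀ p : ℕ, (Xᴴ * X) ^ p * Xᴴ = Xᴴ * (X * Xᴴ) ^ p := by
  intro p
  induction p with
  | zero => simp
  | succ p ih =>
    rw [pow_succ, pow_succ, Matrix.mul_assoc ((Xᴴ*X)^p), Matrix.mul_assoc Xᴴ X Xᴴ,
      ← Matrix.mul_assoc ((Xᴴ*X)^p) Xᴴ, ih, Matrix.mul_assoc]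

lemma hA {κ : Type*} [Fintype κ] (j : ℕ) (Y : Matrix (Fin m) κ ℂ) :
    (Xᴴ*X)^j * (Xᴴ * Y) = Xᴴ * ((X*Xᴴ)^j * Y) := by
  rw [← Matrix.mul_assoc, hcommX' X, Matrix.mul_assoc]

lemma hB {κ : Type*} [Fintype κ] (j : ℕ) (Y : Matrix (Fin n) κ ℂ) :
    (X*Xᴴ)^j * (X * Y) = X * ((Xᴴ*X)^j * Y) := by
  rw [← Matrix.mul_assoc, ← hcommX X, Matrix.mul_assoc]

lemma hBB {κ : Type*} [Fintype κ] (a b : ℕ) (Y : Matrix (Fin m) κ ℂ) :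
    (X*Xᴴ)^a * ((X*Xᴴ)^b * Y) = (X*Xᴴ)^(a+b) * Y := by
  rw [← Matrix.mul_assoc, ← pow_add]

lemma hAA {κ : Type*} [Fintype κ] (a b : ℕ) (Y : Matrix (Fin n) κ ℂ) :
    (Xᴴ*X)^a * ((Xᴴ*X)^b * Y) = (Xᴴ*X)^(a+b) * Y := by
  rw [← Matrix.mul_assoc, ← pow_add]

lemma hXBX (t : ℕ) : Xᴴ * ((X*Xᴴ)^t * X) = (Xᴴ*X)^(t+1) := by
  rw [← hcommX X, ← Matrix.mul_assoc, ← pow_succ']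

lemma hXAX (t : ℕ) : X * ((Xᴴ*X)^t * Xᴴ) = (X*Xᴴ)^(t+1) := by
  rw [hcommX' X, ← Matrix.mul_assoc, ← pow_succ']

lemma hXA' (t : ℕ) : Xᴴ * (X * (Xᴴ*X)^t) = (Xᴴ*X)^(t+1) := by
  rw [← Matrix.mul_assoc, ← pow_succ']

lemma hXB' (t : ℕ) : X * (Xᴴ * (X*Xᴴ)^t) = (X*Xᴴ)^(t+1) := by
  rw [← Matrix.mul_assoc, ← pow_succ']

lemma bVV (j k : ℕ) :
    ⁅(fromBlocks (Complex.I • (Xᴴ*X)^j) 0 0 (-(Complex.I•(X*Xᴴ)^j)) :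
        Matrix (Fin n ⊕ Fin m) (Fin n ⊕ Fin m) ℂ),
      fromBlocks (Complex.I • (Xᴴ*X)^k) 0 0 (-(Complex.I•(X*Xᴴ)^k))⁆ = 0 := by
  rw [Ring.lie_def]
  simp [Matrix.fromBlocks_multiply, fromBlocks_sub', Matrix.smul_mul, Matrix.mul_smul,
    ← pow_add, add_comm j k, ← Matrix.fromBlocks_zero]

lemma bVXt (j p : ℕ) :
    ⁅(fromBlocks (Complex.I • (Xᴴ*X)^j) 0 0 (-(Complex.I•(X*Xᴴ)^j)) :
        Matrix (Fin n ⊕ Fin m) (Fin n ⊕ Fin m) ℂ),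
      fromBlocks 0 ((Xᴴ*X)^p * Xᴴ) (X * (Xᴴ*X)^p) 0⁆ =
    (-2:ℝ) • fromBlocks 0 (-(Complex.I • ((Xᴴ*X)^(j+p) * Xᴴ)))
      (Complex.I • (X * (Xᴴ*X)^(j+p))) 0 := by
  rw [Ring.lie_def]
  simp only [Matrix.fromBlocks_multiply, fromBlocks_sub', Matrix.smul_mul, Matrix.mul_smul,
    Matrix.fromBlocks_smul, Matrix.fromBlocks_neg, hcommX X, hcommX' X,
    hA X, hB X, hBB X, hAA X, hXBX X, hXAX X, hXA' X, hXB' X, ← pow_add, Matrix.mul_assoc,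
    smul_smul, Complex.I_mul_I,
    Matrix.neg_mul, Matrix.mul_neg, smul_neg, neg_smul, Matrix.mul_zero, Matrix.zero_mul,
    zero_sub, sub_zero, neg_neg, zero_smul, smul_zero, neg_zero, ← Nat.add_assoc, Nat.add_comm j p]
  rw [fromBlocks_inj]
  refine ⟨by simp, by module, by module, by simp⟩

lemma bViXt (j p : ℕ) :
    ⁅(fromBlocks (Complex.I • (Xᴴ*X)^j) 0 0 (-(Complex.I•(X*Xᴴ)^j)) :
        Matrix (Fin n ⊕ Fin m) (Fin n ⊕ Fin m) ℂ),
      fromBlocks 0 (-(Complex.I • ((Xᴴ*X)^p * Xᴴ))) (Complex.I • (X * (Xᴴ*X)^p)) 0⁆ =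
    (2:ℝ) • fromBlocks 0 ((Xᴴ*X)^(j+p) * Xᴴ) (X * (Xᴴ*X)^(j+p)) 0 := by
  rw [Ring.lie_def]
  simp only [Matrix.fromBlocks_multiply, fromBlocks_sub', Matrix.smul_mul, Matrix.mul_smul,
    Matrix.fromBlocks_smul, Matrix.fromBlocks_neg, hcommX X, hcommX' X,
    hA X, hB X, hBB X, hAA X, hXBX X, hXAX X, hXA' X, hXB' X, ← pow_add, Matrix.mul_assoc,
    smul_smul, Complex.I_mul_I,
    Matrix.neg_mul, Matrix.mul_neg, smul_neg, neg_smul, Matrix.mul_zero, Matrix.zero_mul,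
    zero_sub, sub_zero, neg_neg, zero_smul, smul_zero, neg_zero, ← Nat.add_assoc, Nat.add_comm j p]
  rw [fromBlocks_inj]
  refine ⟨by simp, by module, by module, by simp⟩

lemma bXtXt (p q : ℕ) :
    ⁅(fromBlocks 0 ((Xᴴ*X)^p * Xᴴ) (X * (Xᴴ*X)^p) 0 :
        Matrix (Fin n ⊕ Fin m) (Fin n ⊕ Fin m) ℂ),
      fromBlocks 0 ((Xᴴ*X)^q * Xᴴ) (X * (Xᴴ*X)^q) 0⁆ = 0 := by
  rw [Ring.lie_def]
  simp only [Matrix.fromBlocks_multiply, fromBlocks_sub', Matrix.smul_mul, Matrix.mul_smul,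
    Matrix.fromBlocks_smul, Matrix.fromBlocks_neg, hcommX X, hcommX' X,
    hA X, hB X, hBB X, hAA X, hXBX X, hXAX X, hXA' X, hXB' X, ← pow_add, Matrix.mul_assoc,
    smul_smul, Complex.I_mul_I,
    Matrix.neg_mul, Matrix.mul_neg, smul_neg, neg_smul, Matrix.mul_zero, Matrix.zero_mul,
    zero_sub, sub_zero, neg_neg, zero_smul, smul_zero, neg_zero, ← Nat.add_assoc, Nat.add_comm p q]
  rw [← Matrix.fromBlocks_zero, fromBlocks_inj]
  refine ⟨by module, by simp, by simp, by module⟩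

lemma biXtiXt (p q : ℕ) :
    ⁅(fromBlocks 0 (-(Complex.I • ((Xᴴ*X)^p * Xᴴ))) (Complex.I • (X * (Xᴴ*X)^p)) 0 :
        Matrix (Fin n ⊕ Fin m) (Fin n ⊕ Fin m) ℂ),
      fromBlocks 0 (-(Complex.I • ((Xᴴ*X)^q * Xᴴ))) (Complex.I • (X * (Xᴴ*X)^q)) 0⁆ = 0 := by
  rw [Ring.lie_def]
  simp only [Matrix.fromBlocks_multiply, fromBlocks_sub', Matrix.smul_mul, Matrix.mul_smul,
    Matrix.fromBlocks_smul, Matrix.fromBlocks_neg, hcommX X, hcommX' X,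
    hA X, hB X, hBB X, hAA X, hXBX X, hXAX X, hXA' X, hXB' X, ← pow_add, Matrix.mul_assoc,
    smul_smul, Complex.I_mul_I,
    Matrix.neg_mul, Matrix.mul_neg, smul_neg, neg_smul, Matrix.mul_zero, Matrix.zero_mul,
    zero_sub, sub_zero, neg_neg, zero_smul, smul_zero, neg_zero, ← Nat.add_assoc, Nat.add_comm p q]
  rw [← Matrix.fromBlocks_zero, fromBlocks_inj]
  refine ⟨by module, by simp, by simp, by module⟩

lemma bXtiXt (p q : ℕ) :
    ⁅(fromBlocks 0 ((Xᴴ*X)^p * Xᴴ) (X * (Xᴴ*X)^p) 0 :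
        Matrix (Fin n ⊕ Fin m) (Fin n ⊕ Fin m) ℂ),
      fromBlocks 0 (-(Complex.I • ((Xᴴ*X)^q * Xᴴ))) (Complex.I • (X * (Xᴴ*X)^q)) 0⁆ =
    (2:ℝ) • fromBlocks (Complex.I • (Xᴴ*X)^(p+q+1)) 0 0 (-(Complex.I•(X*Xᴴ)^(p+q+1))) := by
  rw [Ring.lie_def]
  simp only [Matrix.fromBlocks_multiply, fromBlocks_sub', Matrix.smul_mul, Matrix.mul_smul,
    Matrix.fromBlocks_smul, Matrix.fromBlocks_neg, hcommX X, hcommX' X,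
    hA X, hB X, hBB X, hAA X, hXBX X, hXAX X, hXA' X, hXB' X, ← pow_add, Matrix.mul_assoc,
    smul_smul, Complex.I_mul_I,
    Matrix.neg_mul, Matrix.mul_neg, smul_neg, neg_smul, Matrix.mul_zero, Matrix.zero_mul,
    zero_sub, sub_zero, neg_neg, zero_smul, smul_zero, neg_zero, ← Nat.add_assoc, Nat.add_comm p q]
  rw [fromBlocks_inj]
  refine ⟨by module, by simp, by simp, by module⟩

end Aux

theorem stmt_4 {m n : ℕ} (X : Matrix (Fin m) (Fin n) ℂ) (hX : X ≠ 0)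
    (Xhat iXhat : Matrix (Fin n ⊕ Fin m) (Fin n ⊕ Fin m) ℂ)
    (hXhat : Xhat = Matrix.fromBlocks 0 Xᴴ X 0)
    (hiXhat : iXhat = Matrix.fromBlocks 0 (-(Complex.I • Xᴴ)) (Complex.I • X) 0)
    (V Xt iXt : ℕ → Matrix (Fin n ⊕ Fin m) (Fin n ⊕ Fin m) ℂ)
    (hV : ∀ k, V k = Matrix.fromBlocks
      (Complex.I • (Xᴴ * X) ^ k) 0 0 (-(Complex.I • (X * Xᴴ) ^ k)))
    (hXt : ∀ k, Xt k = Matrix.fromBlocks 0 ((Xᴴ * X) ^ (k - 1) * Xᴴ)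
      (X * (Xᴴ * X) ^ (k - 1)) 0)
    (hiXt : ∀ k, iXt k = Matrix.fromBlocks 0 (-(Complex.I • ((Xᴴ * X) ^ (k - 1) * Xᴴ)))
      (Complex.I • (X * (Xᴴ * X) ^ (k - 1))) 0) :
    ∃ L : LieSubalgebra ℝ (Matrix (Fin n ⊕ Fin m) (Fin n ⊕ Fin m) ℂ),
      (L : Submodule ℝ (Matrix (Fin n ⊕ Fin m) (Fin n ⊕ Fin m) ℂ)) =
        Submodule.span ℝ
          {M | ∃ k : ℕ, 1 ≤ k ∧ (M = V k ∨ M = Xt k ∨ M = iXt k)} ∧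
      Xhat ∈ L ∧ iXhat ∈ L ∧
      LieSubalgebra.lieSpan ℝ (Matrix (Fin n ⊕ Fin m) (Fin n ⊕ Fin m) ℂ)
        {Xhat, iXhat} ≤ L := by
  set gen : Set (Matrix (Fin n ⊕ Fin m) (Fin n ⊕ Fin m) ℂ) :=
    {M | ∃ k : ℕ, 1 ≤ k ∧ (M = V k ∨ M = Xt k ∨ M = iXt k)} with hgen
  set S : Submodule ℝ (Matrix (Fin n ⊕ Fin m) (Fin n ⊕ Fin m) ℂ) :=
    Submodule.span ℝ gen with hSdef
  have memV : ∀ k, 1 ≤ k → V k ∈ S := fun k hk =>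
    Submodule.subset_span ⟨k, hk, Or.inl rfl⟩
  have memXt : ∀ k, 1 ≤ k → Xt k ∈ S := fun k hk =>
    Submodule.subset_span ⟨k, hk, Or.inr (Or.inl rfl)⟩
  have memiXt : ∀ k, 1 ≤ k → iXt k ∈ S := fun k hk =>
    Submodule.subset_span ⟨k, hk, Or.inr (Or.inr rfl)⟩
  -- bracket relations
  have rVV : ∀ j k, ⁅V j, V k⁆ = 0 := fun j k => by rw [hV j, hV k]; exact bVV X j k
  have rVXt : ∀ j k, 1 ≤ k → ⁅V j, Xt k⁆ = (-2:ℝ) • iXt (j + k) := by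
    intro j k hk
    rw [hV j, hXt k, bVXt X j (k-1), show j + (k-1) = (j+k) - 1 from by omega, ← hiXt (j+k)]
  have rViXt : ∀ j k, 1 ≤ k → ⁅V j, iXt k⁆ = (2:ℝ) • Xt (j + k) := by
    intro j k hk
    rw [hV j, hiXt k, bViXt X j (k-1), show j + (k-1) = (j+k) - 1 from by omega, ← hXt (j+k)]
  have rXtXt : ∀ j k, ⁅Xt j, Xt k⁆ = 0 := fun j k => by
    rw [hXt j, hXt k]; exact bXtXt X (j-1) (k-1)
  have riXtiXt : ∀ j k, ⁅iXt j, iXt k⁆ = 0 := fun j k => by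
    rw [hiXt j, hiXt k]; exact biXtiXt X (j-1) (k-1)
  have rXtiXt : ∀ j k, 1 ≤ j → 1 ≤ k → ⁅Xt j, iXt k⁆ = (2:ℝ) • V (j + k - 1) := by
    intro j k hj hk
    rw [hXt j, hiXt k, bXtiXt X (j-1) (k-1),
      show (j-1) + (k-1) + 1 = (j+k) - 1 from by omega, ← hV (j+k-1)]
  -- brackets of generators lie in S
  have key : ∀ x ∈ gen, ∀ y ∈ gen, ⁅x, y⁆ ∈ S := by
    rintro x ⟨j, hj, hx⟩ y ⟨k, hk, hy⟩
    rcases hx with hx | hx | hx <;> rcases hy with hy | hy | hy <;> subst hx hy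
    · rw [rVV]; exact S.zero_mem
    · rw [rVXt j k hk]; exact S.smul_mem _ (memiXt _ (by omega))
    · rw [rViXt j k hk]; exact S.smul_mem _ (memXt _ (by omega))
    · rw [← lie_skew, rVXt k j hj]; exact S.neg_mem (S.smul_mem _ (memiXt _ (by omega)))
    · rw [rXtXt]; exact S.zero_mem
    · rw [rXtiXt j k hj hk]; exact S.smul_mem _ (memV _ (by omega))
    · rw [← lie_skew, rViXt k j hj]; exact S.neg_mem (S.smul_mem _ (memXt _ (by omega)))
    · rw [← lie_skew, rXtiXt k j hk hj]; exact S.neg_mem (S.smul_mem _ (memV _ (by omega)))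
    · rw [riXtiXt]; exact S.zero_mem
  have closure : ∀ x ∈ S, ∀ y ∈ S, ⁅x, y⁆ ∈ S := by
    intro x hx
    induction hx using Submodule.span_induction with
    | mem x hxg =>
      intro y hy
      induction hy using Submodule.span_induction with
      | mem y hyg => exact key x hxg y hyg
      | zero => simp
      | add y z _ _ hy hz => rw [lie_add]; exact S.add_mem hy hz
      | smul a y _ hy => rw [lie_smul]; exact S.smul_mem _ hy
    | zero => intro y hy; simp
    | add x z _ _ hx hz => intro y hy; rw [add_lie]; exact S.add_mem (hx y hy) (hz y hy)
    | smul a x _ hx => intro y hy; rw [smul_lie]; exact S.smul_mem _ (hx y hy)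
  refine ⟨{ toSubmodule := S, lie_mem' := fun {x y} hx hy => closure x hx y hy }, rfl, ?_, ?_, ?_⟩
  · have : Xhat = Xt 1 := by rw [hXhat, hXt 1]; simp
    rw [this]; exact memXt 1 le_rfl
  · have : iXhat = iXt 1 := by rw [hiXhat, hiXt 1]; simp
    rw [this]; exact memiXt 1 le_rfl
  · rw [LieSubalgebra.lieSpan_le]
    intro z hz
    have hz' : z = Xhat ∨ z = iXhat := by simpa using hz
    rcases hz' with h | h
    · rw [h, hXhat, show fromBlocks 0 Xᴴ X 0 = Xt 1 from by rw [hXt 1]; simp]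
      exact memXt 1 le_rfl
    · rw [h, hiXhat, show fromBlocks 0 (-(Complex.I • Xᴴ)) (Complex.I • X) 0 = iXt 1 from by
        rw [hiXt 1]; simp]
      exact memiXt 1 le_rfl
end

section
/- Let W ∈ M_{m×n}(ℂ), z = re^{iθ} ∈ ℂ, and ẑW the matrix in 𝔲(n,m) with top-right block z̄W* and bottom-left block zW. Then exp(ẑW) has top-left block Σ_{k≥0} r^{2k}/(2k)! (W*W)^k, top-right block e^{-iθ} Σ_{k≥0} r^{2k+1}/(2k+1)! (W*W)^k W*, bottom-left block e^{iθ} Σ_{k≥0} r^{2k+1}/(2k+1)! W(W*W)^k, and bottom-right block Σ_{k≥0} r^{2k}/(2k)! (WW*)^k. -/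
open Matrix

section Aux

variable {p q r s : Type*} [Fintype p] [Fintype q] [DecidableEq p] [DecidableEq q]

private lemma offdiag_pow_even (B : Matrix p q ℂ) (C : Matrix q p ℂ) (k : ℕ) :
    (fromBlocks 0 B C 0) ^ (2 * k) = fromBlocks ((B * C) ^ k) 0 0 ((C * B) ^ k) := by
  induction k with
  | zero => simp [Matrix.fromBlocks_one]
  | succ k ih =>
    rw [show 2 * (k + 1) = 2 * k + 1 + 1 by ring, pow_succ, pow_succ, ih]
    simp [Matrix.fromBlocks_multiply, pow_succ, Matrix.mul_assoc]

private lemma offdiag_pow_odd (B : Matrix p q ℂ) (C : Matrix q p ℂ) (k : ℕ) :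
    (fromBlocks 0 B C 0) ^ (2 * k + 1) =
      fromBlocks 0 ((B * C) ^ k * B) ((C * B) ^ k * C) 0 := by
  rw [pow_succ, offdiag_pow_even]
  simp [Matrix.fromBlocks_multiply]

private lemma semiconj_pow (B : Matrix p q ℂ) (C : Matrix q p ℂ) (k : ℕ) :
    (B * C) ^ k * B = B * (C * B) ^ k := by
  induction k with
  | zero => simp
  | succ k ih =>
    rw [pow_succ', Matrix.mul_assoc, ih, pow_succ']
    simp [Matrix.mul_assoc]

private def cornerHom₁₁ (R : Type*) [AddCommMonoid R] :
    Matrix p r R →+ Matrix (p ⊕ q) (r ⊕ s) R where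
  toFun X := fromBlocks X 0 0 0
  map_zero' := by ext (i | i) (j | j) <;> simp
  map_add' X Y := by ext (i | i) (j | j) <;> simp

private def cornerHom₁₂ (R : Type*) [AddCommMonoid R] :
    Matrix p s R →+ Matrix (p ⊕ q) (r ⊕ s) R where
  toFun X := fromBlocks 0 X 0 0
  map_zero' := by ext (i | i) (j | j) <;> simp
  map_add' X Y := by ext (i | i) (j | j) <;> simp

private def cornerHom₂₁ (R : Type*) [AddCommMonoid R] :
    Matrix q r R →+ Matrix (p ⊕ q) (r ⊕ s) R where
  toFun X := fromBlocks 0 0 X 0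
  map_zero' := by ext (i | i) (j | j) <;> simp
  map_add' X Y := by ext (i | i) (j | j) <;> simp

private def cornerHom₂₂ (R : Type*) [AddCommMonoid R] :
    Matrix q s R →+ Matrix (p ⊕ q) (r ⊕ s) R where
  toFun X := fromBlocks 0 0 0 X
  map_zero' := by ext (i | i) (j | j) <;> simp
  map_add' X Y := by ext (i | i) (j | j) <;> simp

private lemma hasSum_fromBlocks {R : Type*} [AddCommMonoid R] [TopologicalSpace R]
    [ContinuousAdd R] {ι : Type*}
    {A : ι → Matrix p r R} {B : ι → Matrix p s R} {C : ι → Matrix q r R} {D : ι → Matrix q s R}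
    {SA : Matrix p r R} {SB : Matrix p s R} {SC : Matrix q r R} {SD : Matrix q s R}
    (hA : HasSum A SA) (hB : HasSum B SB) (hC : HasSum C SC) (hD : HasSum D SD) :
    HasSum (fun i => fromBlocks (A i) (B i) (C i) (D i)) (fromBlocks SA SB SC SD) := by
  have h1 := hA.map (cornerHom₁₁ (q := q) (s := s) R)
    (Continuous.matrix_fromBlocks continuous_id continuous_const continuous_const
      continuous_const)
  have h2 := hB.map (cornerHom₁₂ (q := q) (r := r) R)
    (Continuous.matrix_fromBlocks continuous_const continuous_id continuous_const
      continuous_const)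
  have h3 := hC.map (cornerHom₂₁ (p := p) (s := s) R)
    (Continuous.matrix_fromBlocks continuous_const continuous_const continuous_id
      continuous_const)
  have h4 := hD.map (cornerHom₂₂ (p := p) (r := r) R)
    (Continuous.matrix_fromBlocks continuous_const continuous_const continuous_const
      continuous_id)
  have := ((h1.add h2).add h3).add h4
  convert this using 1
  · funext i
    ext (a | a) (b | b) <;>
      simp [cornerHom₁₁, cornerHom₁₂, cornerHom₂₁, cornerHom₂₂, Function.comp]
  · ext (a | a) (b | b) <;>
      simp [cornerHom₁₁, cornerHom₁₂, cornerHom₂₁, cornerHom₂₂]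

end Aux

section Aux2

variable {p q r s : Type*} {R : Type*}

private def toBlocksHom₁₁ (R : Type*) [AddCommMonoid R] :
    Matrix (p ⊕ q) (r ⊕ s) R →+ Matrix p r R where
  toFun := Matrix.toBlocks₁₁
  map_zero' := rfl
  map_add' _ _ := rfl

private def toBlocksHom₁₂ (R : Type*) [AddCommMonoid R] :
    Matrix (p ⊕ q) (r ⊕ s) R →+ Matrix p s R where
  toFun := Matrix.toBlocks₁₂
  map_zero' := rfl
  map_add' _ _ := rfl

private def toBlocksHom₂₁ (R : Type*) [AddCommMonoid R] :
    Matrix (p ⊕ q) (r ⊕ s) R →+ Matrix q r R where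
  toFun := Matrix.toBlocks₂₁
  map_zero' := rfl
  map_add' _ _ := rfl

private def toBlocksHom₂₂ (R : Type*) [AddCommMonoid R] :
    Matrix (p ⊕ q) (r ⊕ s) R →+ Matrix q s R where
  toFun := Matrix.toBlocks₂₂
  map_zero' := rfl
  map_add' _ _ := rfl

private lemma continuous_toBlocks₁₁ [TopologicalSpace R] :
    Continuous (Matrix.toBlocks₁₁ : Matrix (p ⊕ q) (r ⊕ s) R → Matrix p r R) :=
  continuous_matrix fun _ _ => continuous_id.matrix_elem _ _

private lemma continuous_toBlocks₁₂ [TopologicalSpace R] :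
    Continuous (Matrix.toBlocks₁₂ : Matrix (p ⊕ q) (r ⊕ s) R → Matrix p s R) :=
  continuous_matrix fun _ _ => continuous_id.matrix_elem _ _

private lemma continuous_toBlocks₂₁ [TopologicalSpace R] :
    Continuous (Matrix.toBlocks₂₁ : Matrix (p ⊕ q) (r ⊕ s) R → Matrix q r R) :=
  continuous_matrix fun _ _ => continuous_id.matrix_elem _ _

private lemma continuous_toBlocks₂₂ [TopologicalSpace R] :
    Continuous (Matrix.toBlocks₂₂ : Matrix (p ⊕ q) (r ⊕ s) R → Matrix q s R) :=
  continuous_matrix fun _ _ => continuous_id.matrix_elem _ _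

end Aux2

set_option maxHeartbeats 1000000 in
theorem stmt_8 {m n : ℕ} (W : Matrix (Fin m) (Fin n) ℂ) (r θ : ℝ) (hr : 0 ≤ r)
    (z : ℂ) (hz : z = (r : ℂ) * Complex.exp (θ * Complex.I)) :
    NormedSpace.exp (Matrix.fromBlocks 0 ((starRingEnd ℂ z) • Wᴴ) (z • W) 0) =
      Matrix.fromBlocks
        (∑' k : ℕ, ((r ^ (2 * k) / (Nat.factorial (2 * k)) : ℝ) : ℂ) • (Wᴴ * W) ^ k)
        (Complex.exp (-(θ * Complex.I)) •
          ∑' k : ℕ, ((r ^ (2 * k + 1) / (Nat.factorial (2 * k + 1)) : ℝ) : ℂ) •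
            ((Wᴴ * W) ^ k * Wᴴ))
        (Complex.exp (θ * Complex.I) •
          ∑' k : ℕ, ((r ^ (2 * k + 1) / (Nat.factorial (2 * k + 1)) : ℝ) : ℂ) •
            (W * (Wᴴ * W) ^ k))
        (∑' k : ℕ, ((r ^ (2 * k) / (Nat.factorial (2 * k)) : ℝ) : ℂ) • (W * Wᴴ) ^ k) := by
  set B : Matrix (Fin n) (Fin m) ℂ := (starRingEnd ℂ z) • Wᴴ with hBdef
  set C : Matrix (Fin m) (Fin n) ℂ := z • W with hCdef
  set A : Matrix (Fin n ⊕ Fin m) (Fin n ⊕ Fin m) ℂ := Matrix.fromBlocks 0 B C 0 with hAdef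
  set g₁ : ℕ → Matrix (Fin n) (Fin n) ℂ :=
    fun k => ((r ^ (2 * k) / (Nat.factorial (2 * k)) : ℝ) : ℂ) • (Wᴴ * W) ^ k with hg₁def
  set g₂ : ℕ → Matrix (Fin n) (Fin m) ℂ :=
    fun k => ((r ^ (2 * k + 1) / (Nat.factorial (2 * k + 1)) : ℝ) : ℂ) •
      ((Wᴴ * W) ^ k * Wᴴ) with hg₂def
  set g₃ : ℕ → Matrix (Fin m) (Fin n) ℂ :=
    fun k => ((r ^ (2 * k + 1) / (Nat.factorial (2 * k + 1)) : ℝ) : ℂ) •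
      (W * (Wᴴ * W) ^ k) with hg₃def
  set g₄ : ℕ → Matrix (Fin m) (Fin m) ℂ :=
    fun k => ((r ^ (2 * k) / (Nat.factorial (2 * k)) : ℝ) : ℂ) • (W * Wᴴ) ^ k with hg₄def
  have hconj : (starRingEnd ℂ) z = (r : ℂ) * Complex.exp (-(θ * Complex.I)) := by
    rw [hz, _root_.map_mul, Complex.conj_ofReal, ← Complex.exp_conj, _root_.map_mul,
      Complex.conj_ofReal, Complex.conj_I, mul_neg]
  have hzz : (starRingEnd ℂ) z * z = (r : ℂ) ^ 2 := by
    rw [hconj, hz, mul_mul_mul_comm, ← Complex.exp_add, neg_add_cancel, Complex.exp_zero,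
      mul_one, sq]
  have hBC : B * C = ((r : ℂ) ^ 2) • (Wᴴ * W) := by
    rw [hBdef, hCdef, Matrix.smul_mul, Matrix.mul_smul, smul_smul, hzz]
  have hCB : C * B = ((r : ℂ) ^ 2) • (W * Wᴴ) := by
    rw [hBdef, hCdef, Matrix.smul_mul, Matrix.mul_smul, smul_smul,
      mul_comm z ((starRingEnd ℂ) z), hzz]
  have hsum : Summable (fun N : ℕ => ((N.factorial : ℂ))⁻¹ • A ^ N) := by
    letI : SeminormedRing (Matrix (Fin n ⊕ Fin m) (Fin n ⊕ Fin m) ℂ) :=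
      Matrix.linftyOpSemiNormedRing
    letI : NormedRing (Matrix (Fin n ⊕ Fin m) (Fin n ⊕ Fin m) ℂ) := Matrix.linftyOpNormedRing
    letI : NormedAlgebra ℂ (Matrix (Fin n ⊕ Fin m) (Fin n ⊕ Fin m) ℂ) :=
      Matrix.linftyOpNormedAlgebra
    exact NormedSpace.expSeries_summable' (𝕂 := ℂ) A
  have hfe : Summable (fun k : ℕ => (((2 * k).factorial : ℂ))⁻¹ • A ^ (2 * k)) :=
    hsum.comp_injective (fun a b h => by omega)
  have hfo : Summable (fun k : ℕ => (((2 * k + 1).factorial : ℂ))⁻¹ • A ^ (2 * k + 1)) :=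
    hsum.comp_injective (fun a b h => by omega)
  have heven : ∀ k : ℕ, (((2 * k).factorial : ℂ))⁻¹ • A ^ (2 * k) =
      Matrix.fromBlocks (g₁ k) 0 0 (g₄ k) := by
    intro k
    have hc : (((2 * k).factorial : ℂ))⁻¹ * ((r : ℂ) ^ 2) ^ k =
        ((r ^ (2 * k) / (Nat.factorial (2 * k)) : ℝ) : ℂ) := by push_cast; ring
    rw [hAdef, offdiag_pow_even, hBC, hCB, smul_pow, smul_pow, Matrix.fromBlocks_smul,
      smul_smul, smul_smul, hc]
    simp [hg₁def, hg₄def]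
  have hodd : ∀ k : ℕ, (((2 * k + 1).factorial : ℂ))⁻¹ • A ^ (2 * k + 1) =
      Matrix.fromBlocks 0 (Complex.exp (-(θ * Complex.I)) • g₂ k)
        (Complex.exp (θ * Complex.I) • g₃ k) 0 := by
    intro k
    have hc₂ : (((2 * k + 1).factorial : ℂ))⁻¹ * (((r : ℂ) ^ 2) ^ k * (starRingEnd ℂ) z) =
        Complex.exp (-(θ * Complex.I)) *
          ((r ^ (2 * k + 1) / (Nat.factorial (2 * k + 1)) : ℝ) : ℂ) := by
      rw [hconj]; push_cast; ring
    have hc₃ : (((2 * k + 1).factorial : ℂ))⁻¹ * (((r : ℂ) ^ 2) ^ k * z) =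
        Complex.exp (θ * Complex.I) *
          ((r ^ (2 * k + 1) / (Nat.factorial (2 * k + 1)) : ℝ) : ℂ) := by
      rw [hz]; push_cast; ring
    rw [hAdef, offdiag_pow_odd, hBC, hCB, smul_pow, smul_pow, hBdef, hCdef,
      Matrix.smul_mul, Matrix.mul_smul, smul_smul, Matrix.smul_mul, Matrix.mul_smul, smul_smul,
      semiconj_pow W Wᴴ k, Matrix.fromBlocks_smul, smul_zero, smul_smul, smul_smul,
      hc₂, hc₃, mul_smul, mul_smul]
    simp [hg₂def, hg₃def]
  have hg1 : Summable g₁ := by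
    refine (hfe.map (toBlocksHom₁₁ ℂ) continuous_toBlocks₁₁).congr fun k => ?_
    simp only [Function.comp, toBlocksHom₁₁, AddMonoidHom.coe_mk, ZeroHom.coe_mk, heven k,
      Matrix.toBlocks_fromBlocks₁₁]
    exact Matrix.toBlocks_fromBlocks₁₁ _ _ _ _
  have hg4 : Summable g₄ := by
    refine (hfe.map (toBlocksHom₂₂ ℂ) continuous_toBlocks₂₂).congr fun k => ?_
    simp only [Function.comp, toBlocksHom₂₂, AddMonoidHom.coe_mk, ZeroHom.coe_mk, heven k,
      Matrix.toBlocks_fromBlocks₂₂]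
    exact Matrix.toBlocks_fromBlocks₂₂ _ _ _ _
  have hg2' : Summable (fun k => Complex.exp (-(θ * Complex.I)) • g₂ k) := by
    refine (hfo.map (toBlocksHom₁₂ ℂ) continuous_toBlocks₁₂).congr fun k => ?_
    simp only [Function.comp, toBlocksHom₁₂, AddMonoidHom.coe_mk, ZeroHom.coe_mk, hodd k,
      Matrix.toBlocks_fromBlocks₁₂]
    exact Matrix.toBlocks_fromBlocks₁₂ _ _ _ _
  have hg3' : Summable (fun k => Complex.exp (θ * Complex.I) • g₃ k) := by
    refine (hfo.map (toBlocksHom₂₁ ℂ) continuous_toBlocks₂₁).congr fun k => ?_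
    simp only [Function.comp, toBlocksHom₂₁, AddMonoidHom.coe_mk, ZeroHom.coe_mk, hodd k,
      Matrix.toBlocks_fromBlocks₂₁]
    exact Matrix.toBlocks_fromBlocks₂₁ _ _ _ _
  have hg2 : Summable g₂ := by
    have := hg2'.const_smul (Complex.exp (θ * Complex.I))
    simpa [smul_smul, ← Complex.exp_add] using this
  have hg3 : Summable g₃ := by
    have := hg3'.const_smul (Complex.exp (-(θ * Complex.I)))
    simpa [smul_smul, ← Complex.exp_add] using this
  have hE : HasSum (fun k : ℕ => (((2 * k).factorial : ℂ))⁻¹ • A ^ (2 * k))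
      (Matrix.fromBlocks (∑' k, g₁ k) 0 0 (∑' k, g₄ k)) := by
    rw [funext heven]
    exact hasSum_fromBlocks hg1.hasSum hasSum_zero hasSum_zero hg4.hasSum
  have hO : HasSum (fun k : ℕ => (((2 * k + 1).factorial : ℂ))⁻¹ • A ^ (2 * k + 1))
      (Matrix.fromBlocks 0 (Complex.exp (-(θ * Complex.I)) • ∑' k, g₂ k)
        (Complex.exp (θ * Complex.I) • ∑' k, g₃ k) 0) := by
    rw [funext hodd]
    exact hasSum_fromBlocks hasSum_zero (hg2.hasSum.const_smul _) (hg3.hasSum.const_smul _)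
      hasSum_zero
  have htot :
      HasSum (fun N : ℕ => ((N.factorial : ℂ))⁻¹ • A ^ N)
        (Matrix.fromBlocks (∑' k, g₁ k) (Complex.exp (-(θ * Complex.I)) • ∑' k, g₂ k)
          (Complex.exp (θ * Complex.I) • ∑' k, g₃ k) (∑' k, g₄ k)) := by
    have h := HasSum.even_add_odd (f := fun N : ℕ => ((N.factorial : ℂ))⁻¹ • A ^ N) hE hO
    have heq : Matrix.fromBlocks (∑' k, g₁ k) 0 0 (∑' k, g₄ k) +
        Matrix.fromBlocks 0 (Complex.exp (-(θ * Complex.I)) • ∑' k, g₂ k)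
          (Complex.exp (θ * Complex.I) • ∑' k, g₃ k) 0 =
        Matrix.fromBlocks (∑' k, g₁ k) (Complex.exp (-(θ * Complex.I)) • ∑' k, g₂ k)
          (Complex.exp (θ * Complex.I) • ∑' k, g₃ k) (∑' k, g₄ k) := by
      rw [Matrix.fromBlocks_add, add_zero, zero_add, zero_add, add_zero]
    rwa [heq] at h
  rw [NormedSpace.exp_eq_tsum ℂ]
  exact htot.tsum_eq
end

section
/- Let W ∈ M_{m×n}(ℂ) with singular value decomposition W = BΣA* (A ∈ U(n), B ∈ U(m), Σ the diagonal matrix of singular values σ_1 ≥ ... ≥ σ_a ≥ 0, a = min(n,m)). For z = re^{iθ}, exp(ẑW) = Ω M(z) Ω*, where Ω = blockdiag(A,B) and M(z) has blocks: top-left diag(cosh(σ_j r))_{j=1}^n, bottom-right diag(cosh(σ_j r))_{j=1}^m (with σ_j = 0 for j > a), and bottom-left block equal to e^{iθ} diag(sinh(σ_j r)) extended by zeros, top-right its conjugate transpose. -/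
open Matrix

noncomputable def pd (a b : ℕ) (f : ℕ → ℂ) : Matrix (Fin a) (Fin b) ℂ :=
  Matrix.of fun i j => if (i : ℕ) = (j : ℕ) then f i else 0

lemma pd_mul {a b c : ℕ} (f g : ℕ → ℂ) (h : ∀ j, b ≤ j → f j * g j = 0) :
    pd a b f * pd b c g = pd a c (fun j => f j * g j) := by
  ext i k
  simp only [pd, Matrix.mul_apply, Matrix.of_apply]
  rcases lt_or_ge (i : ℕ) b with hib | hib
  · rw [Finset.sum_eq_single (⟨(i : ℕ), hib⟩ : Fin b)]
    · simp
    · intro j _ hj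
      have hne : ¬ ((i : ℕ) = (j : ℕ)) := by
        intro hh; apply hj; apply Fin.ext; simp [← hh]
      simp [hne]
    · simp
  · rw [Finset.sum_eq_zero (fun (j : Fin b) _ => by
      have hlt := j.isLt
      have hne : ¬ ((i : ℕ) = (j : ℕ)) := by omega
      simp [hne])]
    by_cases hik : (i:ℕ) = (k:ℕ)
    · rw [if_pos hik]
      exact (h (i:ℕ) hib).symm
    · rw [if_neg hik]

lemma pd_congr {a b : ℕ} {f g : ℕ → ℂ} (h : ∀ j, f j = g j) : pd a b f = pd a b g := by
  ext i j; simp [pd, h]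

lemma pd_smul (a b : ℕ) (c : ℂ) (f : ℕ → ℂ) :
    c • pd a b f = pd a b (fun j => c * f j) := by
  ext i j
  simp only [pd, Matrix.smul_apply, Matrix.of_apply, smul_eq_mul, mul_ite, mul_zero]

lemma pd_diag (a : ℕ) (f : ℕ → ℂ) :
    pd a a f = Matrix.diagonal (fun i : Fin a => f i) := by
  ext i j
  by_cases h : i = j
  · simp [pd, h, Matrix.diagonal_apply]
  · have : ¬ ((i:ℕ) = (j:ℕ)) := fun hh => h (Fin.ext hh)
    simp [pd, h, this, Matrix.diagonal_apply]

lemma pd_conjTranspose (a b : ℕ) (f : ℕ → ℂ)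
    (hf : ∀ j, (starRingEnd ℂ) (f j) = f j) :
    (pd a b f)ᴴ = pd b a f := by
  ext j i
  by_cases h : (j:ℕ) = (i:ℕ)
  · simp [pd, Matrix.conjTranspose_apply, h, hf]
  · have h' : ¬ ((i:ℕ) = (j:ℕ)) := fun hh => h hh.symm
    simp [pd, Matrix.conjTranspose_apply, h, h']

theorem stmt_9 {m n : ℕ} (σ : ℕ → ℝ)
    (hσnonneg : ∀ j, 0 ≤ σ j)
    (hσanti : ∀ j k : ℕ, j ≤ k → σ k ≤ σ j)
    (hσzero : ∀ j, min m n ≤ j → σ j = 0)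
    (S : Matrix (Fin m) (Fin n) ℂ)
    (hS : ∀ i j, S i j = if (i : ℕ) = (j : ℕ) then ((σ (i : ℕ) : ℝ) : ℂ) else 0)
    (A : Matrix (Fin n) (Fin n) ℂ) (hA : A ∈ Matrix.unitaryGroup (Fin n) ℂ)
    (B : Matrix (Fin m) (Fin m) ℂ) (hB : B ∈ Matrix.unitaryGroup (Fin m) ℂ)
    (W : Matrix (Fin m) (Fin n) ℂ) (hW : W = B * S * Aᴴ)
    (r θ : ℝ) (hr : 0 ≤ r) (z : ℂ) (hz : z = (r : ℂ) * Complex.exp (θ * Complex.I)) :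
    NormedSpace.exp (Matrix.fromBlocks 0 ((starRingEnd ℂ z) • Wᴴ) (z • W) 0) =
      Matrix.fromBlocks A 0 0 B *
        Matrix.fromBlocks
          (Matrix.diagonal fun j : Fin n => ((Real.cosh (σ (j : ℕ) * r) : ℝ) : ℂ))
          (Matrix.of fun (j : Fin n) (i : Fin m) =>
            if (j : ℕ) = (i : ℕ) then
              Complex.exp (-(θ * Complex.I)) * ((Real.sinh (σ (j : ℕ) * r) : ℝ) : ℂ)
            else 0)
          (Matrix.of fun (i : Fin m) (j : Fin n) =>
            if (i : ℕ) = (j : ℕ) then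
              Complex.exp (θ * Complex.I) * ((Real.sinh (σ (i : ℕ) * r) : ℝ) : ℂ)
            else 0)
          (Matrix.diagonal fun i : Fin m => ((Real.cosh (σ (i : ℕ) * r) : ℝ) : ℂ)) *
        (Matrix.fromBlocks A 0 0 B)ᴴ := by
  classical
  set e₁ : ℂ := Complex.exp (θ * Complex.I) with he₁
  set e₂ : ℂ := Complex.exp (-(θ * Complex.I)) with he₂
  have hzbar : (starRingEnd ℂ) z = (r : ℂ) * e₂ := by
    rw [hz, he₂, RingHom.map_mul, Complex.conj_ofReal, ← Complex.exp_conj, RingHom.map_mul,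
      Complex.conj_ofReal, Complex.conj_I, mul_neg]
  have hzz : (starRingEnd ℂ) z * z = (r : ℂ) ^ 2 := by
    rw [hzbar, hz, he₁, he₂]
    rw [show ((r:ℂ) * Complex.exp (-(θ * Complex.I))) * ((r:ℂ) * Complex.exp (θ * Complex.I))
        = (r:ℂ) * (r:ℂ) * (Complex.exp (-(θ * Complex.I)) * Complex.exp (θ * Complex.I)) by ring,
      ← Complex.exp_add]
    simp [sq]
  set σc : ℕ → ℂ := fun j => ((σ j : ℝ) : ℂ) with hσc
  set t : ℕ → ℂ := fun j => ((σ j * r : ℝ) : ℂ) with ht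
  have hσcz : ∀ j, m ≤ j ∨ n ≤ j → σc j = 0 := by
    intro j hj
    have : σ j = 0 := hσzero j (by rcases hj with h | h <;> omega)
    simp [hσc, this]
  have htz : ∀ j, m ≤ j ∨ n ≤ j → t j = 0 := by
    intro j hj
    have : σ j = 0 := hσzero j (by rcases hj with h | h <;> omega)
    simp [ht, this]
  have hSpd : S = pd m n σc := by
    ext i j; simp [pd, hS, hσc]
  have hSH : Sᴴ = pd n m σc := by
    rw [hSpd, pd_conjTranspose]
    intro j; simp [hσc, Complex.conj_ofReal]
  set Y : Matrix (Fin n ⊕ Fin m) (Fin n ⊕ Fin m) ℂ :=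
    Matrix.fromBlocks 0 ((starRingEnd ℂ z) • pd n m σc) (z • pd m n σc) 0 with hY
  set Ω : Matrix (Fin n ⊕ Fin m) (Fin n ⊕ Fin m) ℂ := Matrix.fromBlocks A 0 0 B with hΩ
  have hA1 : A * Aᴴ = 1 := by
    have := (Matrix.mem_unitaryGroup_iff.mp hA)
    simpa [Matrix.star_eq_conjTranspose] using this
  have hA2 : Aᴴ * A = 1 := by
    have := (Matrix.mem_unitaryGroup_iff'.mp hA)
    simpa [Matrix.star_eq_conjTranspose] using this
  have hB1 : B * Bᴴ = 1 := by
    have := (Matrix.mem_unitaryGroup_iff.mp hB)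
    simpa [Matrix.star_eq_conjTranspose] using this
  have hB2 : Bᴴ * B = 1 := by
    have := (Matrix.mem_unitaryGroup_iff'.mp hB)
    simpa [Matrix.star_eq_conjTranspose] using this
  have hΩ1 : Ω * Ωᴴ = 1 := by
    rw [hΩ, Matrix.fromBlocks_conjTranspose, Matrix.fromBlocks_multiply]
    simp [hA1, hB1, ← Matrix.fromBlocks_one]
  have hΩ2 : Ωᴴ * Ω = 1 := by
    rw [hΩ, Matrix.fromBlocks_conjTranspose, Matrix.fromBlocks_multiply]
    simp [hA2, hB2, ← Matrix.fromBlocks_one]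
  set U : (Matrix (Fin n ⊕ Fin m) (Fin n ⊕ Fin m) ℂ)ˣ := ⟨Ω, Ωᴴ, hΩ1, hΩ2⟩ with hU
  have hX : Matrix.fromBlocks 0 ((starRingEnd ℂ z) • Wᴴ) (z • W) 0 = Ω * Y * Ωᴴ := by
    rw [hW, hY, hΩ, Matrix.fromBlocks_conjTranspose, Matrix.fromBlocks_multiply,
      Matrix.fromBlocks_multiply]
    have hSH' : (pd m n σc)ᴴ = pd n m σc := by
      rw [← hSpd, hSH]
    simp only [Matrix.conjTranspose_mul, Matrix.conjTranspose_conjTranspose, hSpd, hSH']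
    simp [Matrix.mul_smul, Matrix.smul_mul, Matrix.mul_assoc]
  -- powers of Y
  have hY2 : Y ^ 2 = Matrix.fromBlocks (pd n n (fun j => t j ^ 2)) 0 0
      (pd m m (fun j => t j ^ 2)) := by
    rw [sq, hY, Matrix.fromBlocks_multiply]
    have h1 : ((starRingEnd ℂ z) • pd n m σc) * (z • pd m n σc) = pd n n (fun j => t j ^ 2) := by
      rw [Matrix.smul_mul, Matrix.mul_smul, smul_smul,
        pd_mul σc σc (fun j hj => by simp [hσcz j (Or.inl hj)]), pd_smul]
      refine pd_congr fun j => ?_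
      rw [hzz, ht, hσc]; push_cast; ring
    have h2 : (z • pd m n σc) * ((starRingEnd ℂ z) • pd n m σc) = pd m m (fun j => t j ^ 2) := by
      rw [Matrix.smul_mul, Matrix.mul_smul, smul_smul,
        pd_mul σc σc (fun j hj => by simp [hσcz j (Or.inr hj)]), pd_smul]
      refine pd_congr fun j => ?_
      rw [mul_comm z, hzz, ht, hσc]; push_cast; ring
    simp [h1, h2]
  have hYeven : ∀ k : ℕ, Y ^ (2 * k) =
      Matrix.fromBlocks (pd n n (fun j => t j ^ (2 * k))) 0 0
        (pd m m (fun j => t j ^ (2 * k))) := by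
    intro k
    induction k with
    | zero =>
      simp only [Nat.mul_zero, pow_zero]
      rw [pd_diag, pd_diag]
      simp [← Matrix.fromBlocks_one, Matrix.diagonal_one]
    | succ k ih =>
      have : 2 * (k + 1) = 2 * k + 2 := by ring
      rw [this, pow_add, ih, hY2, Matrix.fromBlocks_multiply]
      rw [pd_mul _ _ (fun j hj => by simp [htz j (Or.inr hj)]),
        pd_mul _ _ (fun j hj => by simp [htz j (Or.inl hj)])]
      have he : (fun j => t j ^ (2 * k) * t j ^ 2) = fun j => t j ^ (2 * k + 2) := by
        funext j; rw [← pow_add]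
      simp [he]
  have hYodd : ∀ k : ℕ, Y ^ (2 * k + 1) =
      Matrix.fromBlocks 0 (e₂ • pd n m (fun j => t j ^ (2 * k + 1)))
        (e₁ • pd m n (fun j => t j ^ (2 * k + 1))) 0 := by
    intro k
    rw [pow_succ, hYeven k, hY, Matrix.fromBlocks_multiply]
    have h1 : pd n n (fun j => t j ^ (2 * k)) * ((starRingEnd ℂ z) • pd n m σc) =
        e₂ • pd n m (fun j => t j ^ (2 * k + 1)) := by
      rw [Matrix.mul_smul, pd_mul _ _ (fun j hj => by simp [hσcz j (Or.inr hj)]),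
        pd_smul, pd_smul]
      refine pd_congr fun j => ?_
      rw [hzbar, ht, hσc]; push_cast; ring
    have h2 : pd m m (fun j => t j ^ (2 * k)) * (z • pd m n σc) =
        e₁ • pd m n (fun j => t j ^ (2 * k + 1)) := by
      rw [Matrix.mul_smul, pd_mul _ _ (fun j hj => by simp [hσcz j (Or.inl hj)]),
        pd_smul, pd_smul]
      refine pd_congr fun j => ?_
      rw [hz, ht, hσc]; push_cast; ring
    simp [h1, h2]
  -- the limit matrices
  set Mc : Matrix (Fin n ⊕ Fin m) (Fin n ⊕ Fin m) ℂ :=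
    Matrix.fromBlocks (pd n n (fun j => ((Real.cosh (σ j * r) : ℝ) : ℂ))) 0 0
      (pd m m (fun j => ((Real.cosh (σ j * r) : ℝ) : ℂ))) with hMc
  set Ms : Matrix (Fin n ⊕ Fin m) (Fin n ⊕ Fin m) ℂ :=
    Matrix.fromBlocks 0 (e₂ • pd n m (fun j => ((Real.sinh (σ j * r) : ℝ) : ℂ)))
      (e₁ • pd m n (fun j => ((Real.sinh (σ j * r) : ℝ) : ℂ))) 0 with hMs
  have hcosh : ∀ j : ℕ, Complex.cosh (t j) = ((Real.cosh (σ j * r) : ℝ) : ℂ) := by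
    intro j; rw [ht]; exact (Complex.ofReal_cosh _).symm
  have hsinh : ∀ j : ℕ, Complex.sinh (t j) = ((Real.sinh (σ j * r) : ℝ) : ℂ) := by
    intro j; rw [ht]; exact (Complex.ofReal_sinh _).symm
  have heven : HasSum (fun k : ℕ => (((2 * k).factorial : ℂ))⁻¹ • Y ^ (2 * k)) Mc := by
    refine Pi.hasSum.mpr fun i => Pi.hasSum.mpr fun j => ?_
    simp only [hYeven]
    cases i with
    | inl i =>
      cases j with
      | inl j =>
        simp only [Matrix.smul_apply, Matrix.fromBlocks_apply₁₁, pd, Matrix.of_apply,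
          hMc, smul_eq_mul]
        by_cases h : (i : ℕ) = (j : ℕ)
        · simp only [h, if_true]
          have hc := Complex.hasSum_cosh (t (j:ℕ))
          rw [hcosh] at hc
          simpa [div_eq_mul_inv, mul_comm, h] using hc
        · simpa [h] using hasSum_zero
      | inr j =>
        simpa [hMc] using hasSum_zero
    | inr i =>
      cases j with
      | inl j =>
        simpa [hMc] using hasSum_zero
      | inr j =>
        simp only [Matrix.smul_apply, Matrix.fromBlocks_apply₂₂, pd, Matrix.of_apply,
          hMc, smul_eq_mul]
        by_cases h : (i : ℕ) = (j : ℕ)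
        · simp only [h, if_true]
          have hc := Complex.hasSum_cosh (t (j:ℕ))
          rw [hcosh] at hc
          simpa [div_eq_mul_inv, mul_comm, h] using hc
        · simpa [h] using hasSum_zero
  have hodd : HasSum (fun k : ℕ => (((2 * k + 1).factorial : ℂ))⁻¹ • Y ^ (2 * k + 1)) Ms := by
    refine Pi.hasSum.mpr fun i => Pi.hasSum.mpr fun j => ?_
    simp only [hYodd]
    cases i with
    | inl i =>
      cases j with
      | inl j => simpa [hMs] using hasSum_zero
      | inr j =>
        simp only [Matrix.smul_apply, Matrix.fromBlocks_apply₁₂, pd, Matrix.of_apply,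
          hMs, smul_eq_mul, mul_ite, mul_zero]
        by_cases h : (i : ℕ) = (j : ℕ)
        · simp only [h, if_true]
          have hc := (Complex.hasSum_sinh (t (j:ℕ))).mul_left e₂
          rw [hsinh] at hc
          simpa [div_eq_mul_inv, mul_comm, mul_assoc, mul_left_comm, h] using hc
        · simpa [h] using hasSum_zero
    | inr i =>
      cases j with
      | inl j =>
        simp only [Matrix.smul_apply, Matrix.fromBlocks_apply₂₁, pd, Matrix.of_apply,
          hMs, smul_eq_mul, mul_ite, mul_zero]
        by_cases h : (i : ℕ) = (j : ℕ)
        · simp only [h, if_true]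
          have hc := (Complex.hasSum_sinh (t (j:ℕ))).mul_left e₁
          rw [hsinh] at hc
          simpa [div_eq_mul_inv, mul_comm, mul_assoc, mul_left_comm, h] using hc
        · simpa [h] using hasSum_zero
      | inr j => simpa [hMs] using hasSum_zero
  have hsum : HasSum (fun k : ℕ => ((k.factorial : ℂ))⁻¹ • Y ^ k) (Mc + Ms) :=
    HasSum.even_add_odd heven hodd
  have hexpY : NormedSpace.exp Y = Mc + Ms := by
    rw [NormedSpace.exp_eq_tsum ℂ]
    exact hsum.tsum_eq
  have hconj : NormedSpace.exp (Ω * Y * Ωᴴ) = Ω * NormedSpace.exp Y * Ωᴴ :=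
    Matrix.exp_units_conj U Y
  rw [hX, hconj, hexpY]
  have hMid : Mc + Ms =
      Matrix.fromBlocks
        (Matrix.diagonal fun j : Fin n => ((Real.cosh (σ (j : ℕ) * r) : ℝ) : ℂ))
        (Matrix.of fun (j : Fin n) (i : Fin m) =>
          if (j : ℕ) = (i : ℕ) then
            Complex.exp (-(θ * Complex.I)) * ((Real.sinh (σ (j : ℕ) * r) : ℝ) : ℂ)
          else 0)
        (Matrix.of fun (i : Fin m) (j : Fin n) =>
          if (i : ℕ) = (j : ℕ) then
            Complex.exp (θ * Complex.I) * ((Real.sinh (σ (i : ℕ) * r) : ℝ) : ℂ)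
          else 0)
        (Matrix.diagonal fun i : Fin m => ((Real.cosh (σ (i : ℕ) * r) : ℝ) : ℂ)) := by
    rw [hMc, hMs, Matrix.fromBlocks_add]
    simp only [add_zero, zero_add]
    rw [pd_diag, pd_diag, pd_smul, pd_smul]
    rfl
  rw [hMid, hΩ]
end

section
/- Let W ∈ M_{m×n}(ℂ) with rank W = q and let σ_1,...,σ_q > 0 be the positive square roots of the nonzero eigenvalues of W*W. The map z ↦ exp(ẑW) from ℂ to U(n,m) is injective, where ẑW is the block matrix with top-right block z̄W* and bottom-left block zW. -/
open Matrix NormedSpace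

lemma exp_herm_inj {k : Type*} [Fintype k] [DecidableEq k]
    {A B : Matrix k k ℂ} (hA : A.IsHermitian) (hB : B.IsHermitian)
    (h : exp A = exp B) : A = B := by
  letI : NormedRing (Matrix k k ℂ) := Matrix.instL2OpNormedRing
  letI : NormedAlgebra ℂ (Matrix k k ℂ) := Matrix.instL2OpNormedAlgebra
  letI : NormedAlgebra ℝ (Matrix k k ℂ) := NormedAlgebra.restrictScalars ℝ ℂ (Matrix k k ℂ)
  have hA' : IsSelfAdjoint A := hA
  have hB' : IsSelfAdjoint B := hB
  have h' : exp A = exp B := by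
    exact h
  calc A = CFC.log (exp A) := (CFC.log_exp A hA').symm
    _ = CFC.log (exp B) := by rw [h']
    _ = B := CFC.log_exp B hB'

theorem stmt_10 {m n : ℕ} (W : Matrix (Fin m) (Fin n) ℂ) (hW : W ≠ 0) :
    Function.Injective (fun z : ℂ =>
      NormedSpace.exp
        (Matrix.fromBlocks 0 ((starRingEnd ℂ z) • Wᴴ) (z • W) 0)) := by
  intro z w h
  have herm : ∀ z : ℂ, (Matrix.fromBlocks 0 ((starRingEnd ℂ z) • Wᴴ) (z • W) 0).IsHermitian := by
    intro z
    unfold Matrix.IsHermitian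
    rw [Matrix.fromBlocks_conjTranspose]
    simp [Matrix.conjTranspose_smul]
  have h2 := exp_herm_inj (herm z) (herm w) h
  have h3 := congrArg Matrix.toBlocks₂₁ h2
  simp only [Matrix.toBlocks_fromBlocks₂₁] at h3
  have h5 : (z - w) • W = 0 := by rw [sub_smul, h3, sub_self]
  rcases smul_eq_zero.mp h5 with h4 | h4
  · exact sub_eq_zero.mp h4
  · exact absurd h4 hW
end
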